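/- Let m ≥ 1 and let V₁, …, V_m be finite-dimensional vector spaces over ℚ, with V = V₁ × ⋯ × V_m, and for each i let φᵢ : ℚ(Vᵢ) → ℚ(V) be the field embedding induced by the canonical inclusion Vᵢ ↪ V. For each i, let Σᵢ ⊆ Vᵢ be a set which is the union of a finite pairwise-disjoint family of simple sectors with data (x⁽ⁱ'ʲ⁾; e⁽ⁱ'ʲ⁾), j = 1, …, kᵢ. Suppose the product Σ₁ × ⋯ × Σ_m ⊆ V is the union of a finite pairwise-disjoint family of simple sectors in V with data (y⁽ᵗ⁾; f⁽ᵗ⁾), t = 1, …, K. Then ∑_{t=1}^{K} S(y⁽ᵗ⁾; f⁽ᵗ⁾) = ∏_{i=1}^{m} φᵢ( ∑_{j=1}^{kᵢ} S(x⁽ⁱ'ʲ⁾; e⁽ⁱ'ʲ⁾) ) in ℚ(V). -/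

import Mathlib

open AddMonoidAlgebra Finset
open scoped Classical
noncomputable section
set_option linter.unusedSectionVars false
namespace SfracAux
variable {V : Type*} [AddCommGroup V] [Module ℚ V]

def shiftEnd (w : V) : Module.End ℚ (V → ℚ) where
  toFun g := fun v => g (v - w)
  map_add' _ _ := rfl
  map_smul' _ _ := rfl

def shiftHom : Multiplicative V →* Module.End ℚ (V → ℚ) where
  toFun w := shiftEnd (Multiplicative.toAdd w)
  map_one' := by ext g v; simp [shiftEnd]
  map_mul' w₁ w₂ := by
    ext g v
    simp [shiftEnd, Module.End.mul_apply, sub_sub]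

def T : AddMonoidAlgebra ℚ V →ₐ[ℚ] Module.End ℚ (V → ℚ) :=
  AddMonoidAlgebra.lift ℚ (Module.End ℚ (V → ℚ)) V shiftHom

lemma T_single (w : V) (c : ℚ) (g : V → ℚ) (v : V) :
    T (single w c) g v = c * g (v - w) := by
  simp [T, AddMonoidAlgebra.lift_single, shiftHom, shiftEnd]

lemma T_mul (a b : AddMonoidAlgebra ℚ V) (g : V → ℚ) :
    T (a * b) g = T a (T b g) := by
  simp [map_mul, Module.End.mul_apply]

def δ (w : V) : V → ℚ := fun v => if v = w then 1 else 0

lemma T_delta (p : AddMonoidAlgebra ℚ V) : T p (δ 0) = fun v => p.coeff v := by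
  induction p using AddMonoidAlgebra.induction_linear with
  | zero => funext v; simp
  | add f g hf hg =>
      funext v
      have h : T (f + g) = T f + T g := map_add T f g
      rw [h]
      simp only [LinearMap.add_apply, Pi.add_apply, hf, hg, AddMonoidAlgebra.coeff_add, Finsupp.add_apply]
  | single a b =>
      funext v
      rw [T_single]
      simp only [δ, sub_eq_zero, AddMonoidAlgebra.coeff_single, Finsupp.single_apply]
      by_cases h : v = a
      · rw [if_pos h, if_pos h.symm, mul_one]
      · rw [if_neg h, if_neg (fun h' => h h'.symm), mul_zero]

lemma T_inj {a b : AddMonoidAlgebra ℚ V} (h : T a (δ 0) = T b (δ 0)) : a = b := by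
  rw [T_delta, T_delta] at h
  exact AddMonoidAlgebra.coeff_injective (Finsupp.ext fun v => congrFun h v)

lemma T_single_delta (w : V) : T (single w 1) (δ 0) = δ w := by
  funext v; rw [T_single]; simp [δ, sub_eq_zero]

end SfracAux

namespace SfracAux
variable {V : Type*} [AddCommGroup V] [Module ℚ V]

def ind (S : Set V) : V → ℚ := fun v => if v ∈ S then 1 else 0

def gSector {ι : Type*} [Fintype ι] (x₀ : V) (E : ι → V) : Set V :=
  {v | ∃ a : ι → ℕ, v = x₀ + ∑ s, a s • E s}

lemma rep_unique {ι : Type*} [Fintype ι] {E : ι → V} (hE : LinearIndependent ℚ E)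
    {a b : ι → ℕ} (h : ∑ s, a s • E s = ∑ s, b s • E s) : a = b := by
  have h2 : ∑ s, ((a s : ℚ) - (b s : ℚ)) • E s = 0 := by
    simp only [sub_smul, Finset.sum_sub_distrib, Nat.cast_smul_eq_nsmul, h, sub_self]
  have := Fintype.linearIndependent_iff.mp hE _ h2
  funext s
  have := sub_eq_zero.mp (this s)
  exact_mod_cast this

lemma sum_succ_aux {n : ℕ} (E : Fin (n+1) → V) (a : Fin (n+1) → ℕ) :
    ∑ i, a i • E i = a 0 • E 0 + ∑ s : Fin n, a s.succ • (E ∘ Fin.succ) s :=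
  Fin.sum_univ_succ _

lemma sum_bump {n : ℕ} (E : Fin (n+1) → V) (a : Fin (n+1) → ℕ) :
    ∑ i, (fun i => if i = 0 then a 0 + 1 else a i) i • E i = E 0 + ∑ i, a i • E i := by
  rw [sum_succ_aux, sum_succ_aux E a]
  have h1 : ∀ s : Fin n, (if s.succ = (0 : Fin (n+1)) then a 0 + 1 else a s.succ) = a s.succ :=
    fun s => if_neg (Fin.succ_ne_zero s)
  rw [if_pos rfl, Finset.sum_congr rfl (fun s _ => by rw [h1 s]), succ_nsmul]
  abel

lemma key_fin (n : ℕ) (x₀ : V) (E : Fin n → V) (hE : LinearIndependent ℚ E) :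
    T (∏ s, (1 - single (E s) 1)) (ind (gSector x₀ E)) = δ x₀ := by
  induction n generalizing x₀ with
  | zero =>
      have hs : gSector x₀ E = {x₀} := by
        ext v; simp [gSector]
      simp only [Finset.univ_eq_empty, Finset.prod_empty, map_one, Module.End.one_apply]
      rw [hs]
      funext v
      simp [ind, δ, Set.mem_singleton_iff]
  | succ n IH =>
      set E' : Fin n → V := E ∘ Fin.succ with hE'def
      have hE' : LinearIndependent ℚ E' := hE.comp Fin.succ (Fin.succ_injective n)
      have hsub : gSector (x₀ + E 0) E ⊆ gSector x₀ E := by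
        rintro v ⟨a, ha⟩
        refine ⟨fun i => if i = 0 then a 0 + 1 else a i, ?_⟩
        rw [sum_bump, ha]; abel
      have hmem : ∀ v, v ∈ gSector x₀ E ∧ v ∉ gSector (x₀ + E 0) E ↔ v ∈ gSector x₀ E' := by
        intro v
        constructor
        · rintro ⟨⟨a, ha⟩, hnot⟩
          rcases Nat.eq_zero_or_pos (a 0) with h0 | h0
          · refine ⟨fun s => a s.succ, ?_⟩
            rw [ha, sum_succ_aux, h0, zero_smul, zero_add]
          · exfalso; apply hnot
            set b : Fin (n+1) → ℕ := fun i => if i = 0 then a 0 - 1 else a i with hbdef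
            refine ⟨b, ?_⟩
            have hb0 : b 0 = a 0 - 1 := if_pos rfl
            have hbs : ∀ s : Fin n, b s.succ = a s.succ := fun s => if_neg (Fin.succ_ne_zero s)
            have hsum : ∑ i, a i • E i = E 0 + ∑ i, b i • E i := by
              have hsumb : ∑ s : Fin n, b s.succ • (E ∘ Fin.succ) s
                  = ∑ s : Fin n, a s.succ • (E ∘ Fin.succ) s :=
                Finset.sum_congr rfl (fun s _ => by rw [hbs s])
              rw [sum_succ_aux E a, sum_succ_aux E b, hb0, hsumb]
              have h3 : a 0 = (a 0 - 1) + 1 := by omega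
              rw [h3, succ_nsmul, Nat.add_sub_cancel]
              abel
            rw [ha, hsum]; abel
        · rintro ⟨a', ha'⟩
          have hmem1 : v ∈ gSector x₀ E := by
            refine ⟨Fin.cases 0 a', ?_⟩
            rw [sum_succ_aux]
            simp only [Fin.cases_zero, Fin.cases_succ, zero_smul, zero_add]
            exact ha'
          refine ⟨hmem1, ?_⟩
          rintro ⟨b, hb⟩
          have hv2 : v = x₀ + ∑ i, (fun i => if i = 0 then b 0 + 1 else b i) i • E i := by
            rw [sum_bump, hb]; abel
          have hv1 : v = x₀ + ∑ i, (Fin.cases 0 a' : Fin (n+1) → ℕ) i • E i := by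
            rw [sum_succ_aux]
            simp only [Fin.cases_zero, Fin.cases_succ, zero_smul, zero_add]
            exact ha'
          have heq : (Fin.cases 0 a' : Fin (n+1) → ℕ) = fun i => if i = 0 then b 0 + 1 else b i :=
            rep_unique hE (by
              have := hv1.symm.trans hv2
              exact add_left_cancel this)
          have := congrFun heq 0
          simp at this
      have step : T (1 - single (E 0) 1) (ind (gSector x₀ E)) = ind (gSector x₀ E') := by
        funext v
        have h1 : T ((1 : AddMonoidAlgebra ℚ V) - single (E 0) 1) (ind (gSector x₀ E)) v
            = ind (gSector x₀ E) v - ind (gSector x₀ E) (v - E 0) := by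
          rw [map_sub]
          simp only [LinearMap.sub_apply, Pi.sub_apply, map_one, Module.End.one_apply]
          rw [T_single]; ring
        rw [h1]
        have hshift : (v - E 0 ∈ gSector x₀ E) ↔ v ∈ gSector (x₀ + E 0) E := by
          constructor
          · rintro ⟨a, ha⟩
            refine ⟨a, ?_⟩
            have := sub_eq_iff_eq_add.mp ha
            rw [this]; abel
          · rintro ⟨a, ha⟩
            refine ⟨a, ?_⟩
            rw [ha]; abel
        simp only [ind]
        by_cases h2 : v ∈ gSector x₀ E'
        · have h3 := (hmem v).mpr h2
          rw [if_pos h3.1, if_pos h2, if_neg (fun hc => h3.2 (hshift.mp hc))]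
          norm_num
        · rw [if_neg h2]
          by_cases h4 : v ∈ gSector x₀ E
          · have h5 : v ∈ gSector (x₀ + E 0) E := by
              by_contra h5
              exact h2 ((hmem v).mp ⟨h4, h5⟩)
            rw [if_pos h4, if_pos (hshift.mpr h5)]; norm_num
          · rw [if_neg h4, if_neg (fun hc => h4 (hsub (hshift.mp hc)))]; norm_num
      have hprod : (∏ s : Fin (n+1), (1 - single (E s) 1) : AddMonoidAlgebra ℚ V)
          = (∏ s : Fin n, (1 - single (E' s) 1)) * (1 - single (E 0) 1) := by
        rw [Fin.prod_univ_succ, mul_comm]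
        rfl
      rw [hprod, T_mul, step]
      exact IH x₀ E' hE'
lemma key_gen {ι : Type*} [Fintype ι] (x₀ : V) (E : ι → V) (hE : LinearIndependent ℚ E) :
    T (∏ s, (1 - single (E s) 1)) (ind (gSector x₀ E)) = δ x₀ := by
  classical
  obtain ⟨ε⟩ := Fintype.truncEquivFin ι
  set E' : Fin (Fintype.card ι) → V := E ∘ ε.symm with hE'def
  have hE' : LinearIndependent ℚ E' := hE.comp ε.symm ε.symm.injective
  have hset : gSector x₀ E = gSector x₀ E' := by
    ext v
    constructor
    · rintro ⟨a, ha⟩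
      refine ⟨a ∘ ε.symm, ?_⟩
      rw [ha]
      congr 1
      exact (Equiv.sum_comp ε.symm (fun s => a s • E s)).symm
    · rintro ⟨a, ha⟩
      refine ⟨a ∘ ε, ?_⟩
      rw [ha]
      congr 1
      rw [← Equiv.sum_comp ε.symm (fun s => (a ∘ ε) s • E s)]
      apply Finset.sum_congr rfl
      intro t _
      show a t • E' t = (a ∘ ε) (ε.symm t) • E (ε.symm t)
      simp only [Function.comp_apply, Equiv.apply_symm_apply]
      rfl
  have hprod : (∏ s, (1 - single (E s) 1) : AddMonoidAlgebra ℚ V)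
      = ∏ t, (1 - single (E' t) 1) :=
    (Equiv.prod_comp ε.symm (fun s => (1 - single (E s) 1))).symm
  rw [hset, hprod]
  exact key_fin _ x₀ E' hE'

lemma prod_single_one {α : Type*} (s : Finset α) (v : α → V) :
    (∏ i ∈ s, single (v i) (1:ℚ)) = single (∑ i ∈ s, v i) 1 := by
  classical
  induction s using Finset.induction_on with
  | empty => rw [Finset.prod_empty, Finset.sum_empty, AddMonoidAlgebra.one_def]
  | insert a s hni ih =>
      rw [Finset.prod_insert hni, Finset.sum_insert hni, ih, single_mul_single, mul_one]

lemma ind_iUnion {K : ℕ} (S : Fin K → Set V)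
    (hdis : ∀ t t', t ≠ t' → Disjoint (S t) (S t')) :
    ind (⋃ t, S t) = ∑ t, ind (S t) := by
  classical
  funext v
  simp only [ind, Finset.sum_apply]
  by_cases h : v ∈ ⋃ t, S t
  · obtain ⟨t, ht⟩ := Set.mem_iUnion.mp h
    rw [if_pos h, Finset.sum_eq_single t]
    · rw [if_pos ht]
    · intro t' _ hne
      rw [if_neg]
      intro hc
      exact Set.disjoint_left.mp (hdis t' t hne) hc ht
    · intro hc; exact absurd (Finset.mem_univ t) hc
  · rw [if_neg h]
    symm
    apply Finset.sum_eq_zero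
    intro t _
    rw [if_neg (fun hc => h (Set.mem_iUnion.mpr ⟨t, hc⟩))]
lemma one_sub_single_ne_zero {v : V} (hv : v ≠ 0) :
    (1 - single v 1 : AddMonoidAlgebra ℚ V) ≠ 0 := by
  intro h
  have h0 : ((1 - single v 1 : AddMonoidAlgebra ℚ V)).coeff 0 = 0 := by rw [h]; rfl
  rw [AddMonoidAlgebra.coeff_sub, Finsupp.sub_apply] at h0
  rw [AddMonoidAlgebra.one_def] at h0
  rw [AddMonoidAlgebra.coeff_single, AddMonoidAlgebra.coeff_single, Finsupp.single_eq_same, Finsupp.single_eq_of_ne' hv] at h0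
  norm_num at h0

end SfracAux

namespace SfracAux
variable {m : ℕ} {V : Fin m → Type*} [∀ i, AddCommGroup (V i)] [∀ i, Module ℚ (V i)]

lemma sigma_sum_apply {R : Type*} [Semiring R] [∀ i, Module R (V i)]
    {n : Fin m → ℕ} (E : ∀ i, Fin (n i) → V i) (A : (Σ i, Fin (n i)) → R) (w : Fin m) :
    (∑ σ : Σ i, Fin (n i), A σ • (Pi.single σ.1 (E σ.1 σ.2) : ∀ i, V i)) w
      = ∑ ℓ, A ⟨w, ℓ⟩ • E w ℓ := by
  classical
  have hsig : (∑ σ : Σ i, Fin (n i), A σ • (Pi.single σ.1 (E σ.1 σ.2) : ∀ i, V i))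
      = ∑ i : Fin m, ∑ ℓ : Fin (n i), A ⟨i,ℓ⟩ • (Pi.single i (E i ℓ) : ∀ i, V i) := by
    rw [← Finset.univ_sigma_univ, Finset.sum_sigma]
  rw [hsig, Finset.sum_apply]
  have h1 : ∀ i : Fin m, (∑ ℓ : Fin (n i), A ⟨i, ℓ⟩ • (Pi.single i (E i ℓ) : ∀ i, V i)) w
      = if w = i then ∑ ℓ, A ⟨w, ℓ⟩ • E w ℓ else 0 := by
    intro i
    rw [Finset.sum_apply]
    by_cases hw : w = i
    · subst hw
      rw [if_pos rfl]
      apply Finset.sum_congr rfl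
      intro ℓ _
      rw [← Pi.single_smul, Pi.single_eq_same]
    · rw [if_neg hw]
      apply Finset.sum_eq_zero
      intro ℓ _
      rw [← Pi.single_smul, Pi.single_eq_of_ne hw]
  rw [Finset.sum_congr rfl (fun i (_ : i ∈ Finset.univ) => h1 i),
    Finset.sum_ite_eq Finset.univ w, if_pos (Finset.mem_univ w)]

lemma linearIndependent_sigma {n : Fin m → ℕ} (E : ∀ i, Fin (n i) → V i)
    (hE : ∀ i, LinearIndependent ℚ (E i)) :
    LinearIndependent ℚ (fun σ : Σ i, Fin (n i) => (Pi.single σ.1 (E σ.1 σ.2) : ∀ i, V i)) := by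
  rw [Fintype.linearIndependent_iff]
  intro g hg σ
  obtain ⟨w, ℓ⟩ := σ
  have hw := congrFun hg w
  rw [sigma_sum_apply E g w] at hw
  exact Fintype.linearIndependent_iff.mp (hE w) _ hw ℓ

lemma pi_sector (x : ∀ i, V i) {n : Fin m → ℕ} (E : ∀ i, Fin (n i) → V i) :
    Set.univ.pi (fun i => gSector (x i) (E i))
      = gSector x (fun σ : Σ i, Fin (n i) => (Pi.single σ.1 (E σ.1 σ.2) : ∀ i, V i)) := by
  ext v
  rw [Set.mem_univ_pi]
  constructor
  · intro h
    choose a ha using h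
    refine ⟨fun σ => a σ.1 σ.2, ?_⟩
    funext w
    rw [Pi.add_apply, sigma_sum_apply]
    exact ha w
  · rintro ⟨A, hA⟩ i
    refine ⟨fun ℓ => A ⟨i, ℓ⟩, ?_⟩
    rw [hA, Pi.add_apply, sigma_sum_apply]

end SfracAux



/-- The group algebra `ℚ[V]` of a ℚ-vector space `V` is an integral domain
(it has no zero divisors since `V` has unique sums, being torsion-free). -/
instance (V : Type*) [AddCommGroup V] [Module ℚ V] : IsDomain (AddMonoidAlgebra ℚ V) :=
  NoZeroDivisors.to_isDomain _

/-- The simple sector associated to a datum `(x₀; e₁, …, e_m)`: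
the set `{x₀ + a₁e₁ + ⋯ + a_m e_m : aᵢ ∈ ℤ, aᵢ ≥ 0}`. -/
def simpleSector {V : Type*} [AddCommGroup V] [Module ℚ V] {m : ℕ}
    (x₀ : V) (e : Fin m → V) : Set V :=
  {y | ∃ a : Fin m → ℕ, y = x₀ + ∑ i, a i • e i}

/-- The element `S(x₀; e) = e^{x₀} / ∏ᵢ (1 − e^{eᵢ})` of the fraction field `ℚ(V)`
of the group algebra `ℚ[V]` associated to a simple-sector datum `(x₀; e₁, …, e_m)`. -/
noncomputable def Sfrac {V : Type*} [AddCommGroup V] [Module ℚ V] {m : ℕ}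
    (x₀ : V) (e : Fin m → V) : FractionRing (AddMonoidAlgebra ℚ V) :=
  algebraMap (AddMonoidAlgebra ℚ V) (FractionRing (AddMonoidAlgebra ℚ V))
      (AddMonoidAlgebra.single x₀ 1) /
    ∏ i, (1 - algebraMap (AddMonoidAlgebra ℚ V) (FractionRing (AddMonoidAlgebra ℚ V))
      (AddMonoidAlgebra.single (e i) 1))

open SfracAux in
set_option maxHeartbeats 2000000 in
set_option synthInstance.maxHeartbeats 1000000 in
/-- Fubini for the universal regularized sums: if each `Σᵢ ⊆ Vᵢ` is a finite
pairwise-disjoint union of simple sectors and the product `Σ₁ × ⋯ × Σ_m ⊆ V₁ × ⋯ × V_m`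
is a finite pairwise-disjoint union of simple sectors, then the `S`-sum of the product
decomposition equals the product over `i` of the images, under the field embeddings
`φᵢ : ℚ(Vᵢ) → ℚ(V₁ × ⋯ × V_m)` induced by the canonical inclusions, of the `S`-sums
of the factor decompositions. -/
theorem Sfrac_sum_prod
    (m : ℕ) (hm : 1 ≤ m) (V : Fin m → Type*)
    [∀ i, AddCommGroup (V i)] [∀ i, Module ℚ (V i)] [∀ i, FiniteDimensional ℚ (V i)]
    (φ : ∀ i, FractionRing (AddMonoidAlgebra ℚ (V i)) →+*
      FractionRing (AddMonoidAlgebra ℚ (∀ i, V i)))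
    (hφ : ∀ i (v : V i),
      φ i (algebraMap (AddMonoidAlgebra ℚ (V i)) (FractionRing (AddMonoidAlgebra ℚ (V i)))
          (AddMonoidAlgebra.single v 1)) =
        algebraMap (AddMonoidAlgebra ℚ (∀ i, V i)) (FractionRing (AddMonoidAlgebra ℚ (∀ i, V i)))
          (AddMonoidAlgebra.single (Pi.single i v) 1))
    (k : Fin m → ℕ) (x : ∀ i, Fin (k i) → V i) (n : ∀ i, Fin (k i) → ℕ)
    (e : ∀ i, ∀ j : Fin (k i), Fin (n i j) → V i)
    (he : ∀ i j, LinearIndependent ℚ (e i j))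
    (hd : ∀ i, ∀ j j' : Fin (k i), j ≠ j' →
      Disjoint (simpleSector (x i j) (e i j)) (simpleSector (x i j') (e i j')))
    (K : ℕ) (y : Fin K → ∀ i, V i) (N : Fin K → ℕ)
    (f : ∀ t : Fin K, Fin (N t) → ∀ i, V i)
    (hf : ∀ t, LinearIndependent ℚ (f t))
    (hdf : ∀ t t' : Fin K, t ≠ t' →
      Disjoint (simpleSector (y t) (f t)) (simpleSector (y t') (f t')))
    (hunion : (⋃ t, simpleSector (y t) (f t)) =
      Set.univ.pi (fun i => ⋃ j, simpleSector (x i j) (e i j))) :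
    ∑ t, Sfrac (y t) (f t) = ∏ i, φ i (∑ j, Sfrac (x i j) (e i j)) := by

  classical
  set R := AddMonoidAlgebra ℚ (∀ i, V i) with hR
  set L := FractionRing R with hL
  set alg := algebraMap R L with halgdef
  -- the basic ring elements
  set q : Fin K → R := fun t => ∏ s, (1 - single (f t s) 1) with hqdef
  set p : (i : Fin m) → Fin (k i) → R :=
    fun i j => ∏ ℓ, (1 - single (Pi.single i (e i j ℓ) : ∀ i, V i) 1) with hpdef
  set Q : R := ∏ t, q t with hQdef
  set P : R := ∏ i, ∏ j, p i j with hPdef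
  -- nonzeroness of the denominators
  have hne : ∀ (v : ∀ i, V i), v ≠ 0 → (1 - single v 1 : R) ≠ 0 :=
    fun v hv => one_sub_single_ne_zero hv
  have hq0 : ∀ t, q t ≠ 0 := fun t =>
    Finset.prod_ne_zero_iff.mpr (fun s _ => hne _ ((hf t).ne_zero s))
  have hp0 : ∀ i j, p i j ≠ 0 := by
    intro i j
    refine Finset.prod_ne_zero_iff.mpr (fun ℓ _ => hne _ ?_)
    intro hzero
    have h := congrFun hzero i
    rw [Pi.single_eq_same] at h
    exact (he i j).ne_zero ℓ h
  have hQ0 : Q ≠ 0 := Finset.prod_ne_zero_iff.mpr (fun t _ => hq0 t)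
  have hP0 : P ≠ 0 := Finset.prod_ne_zero_iff.mpr
    (fun i _ => Finset.prod_ne_zero_iff.mpr (fun j _ => hp0 i j))
  have halg_inj : Function.Injective alg := IsFractionRing.injective R L
  have halg0 : ∀ {r : R}, r ≠ 0 → alg r ≠ 0 :=
    fun {r} hr h => hr (halg_inj (by rw [h, map_zero]))
  -- the two algebra elements to compare
  set A : R := ∑ t, single (y t) 1 * ((∏ t' ∈ Finset.univ.erase t, q t') * P) with hAdef
  set B : R := Q * ∏ i, (∑ j, single (Pi.single i (x i j) : ∀ i, V i) 1 *
    ∏ j' ∈ Finset.univ.erase j, p i j') with hBdef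
  -- telescoping for each sector of the product decomposition
  have hsec : ∀ t, T (q t) (ind (simpleSector (y t) (f t))) = δ (y t) :=
    fun t => key_fin (N t) (y t) (f t) (hf t)
  -- computing T A (δ 0)
  have hTA : T A (δ (0 : ∀ i, V i))
      = T (Q * P) (ind (⋃ t, simpleSector (y t) (f t))) := by
    have h1 : ∀ t : Fin K,
        T (single (y t) 1 * ((∏ t' ∈ Finset.univ.erase t, q t') * P)) (δ (0 : ∀ i, V i))
          = T (Q * P) (ind (simpleSector (y t) (f t))) := by
      intro t
      have e1 : single (y t) 1 * ((∏ t' ∈ Finset.univ.erase t, q t') * P)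
          = ((∏ t' ∈ Finset.univ.erase t, q t') * P) * single (y t) 1 := mul_comm _ _
      rw [e1, T_mul, T_single_delta, ← hsec t, ← T_mul]
      have e2 : (∏ t' ∈ Finset.univ.erase t, q t') * P * q t = Q * P := by
        rw [hQdef, ← Finset.prod_erase_mul Finset.univ q (Finset.mem_univ t)]; ring
      rw [e2]
    calc T A (δ (0 : ∀ i, V i))
        = ∑ t, T (single (y t) 1 * ((∏ t' ∈ Finset.univ.erase t, q t') * P))
            (δ (0 : ∀ i, V i)) := by
          rw [hAdef, map_sum, LinearMap.sum_apply]
      _ = ∑ t, T (Q * P) (ind (simpleSector (y t) (f t))) :=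
          Finset.sum_congr rfl (fun t _ => h1 t)
      _ = T (Q * P) (∑ t, ind (simpleSector (y t) (f t))) := (map_sum (T (Q*P)) _ _).symm
      _ = T (Q * P) (ind (⋃ t, simpleSector (y t) (f t))) := by
          rw [ind_iUnion (fun t => simpleSector (y t) (f t)) hdf]
  -- computing T B (δ 0)
  have hpiind : ∀ (As : ∀ i, Set (V i)) (v : ∀ i, V i),
      ind (Set.univ.pi As) v = ∏ i, ind (As i) (v i) := by
    intro As v
    simp only [ind, Set.mem_univ_pi]
    rw [Finset.prod_boole]
    simp
  have hTB : T B (δ (0 : ∀ i, V i))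
      = T (Q * P) (ind (Set.univ.pi (fun i => ⋃ j, simpleSector (x i j) (e i j)))) := by
    set Sc : (∀ i, Fin (k i)) → Set (∀ i, V i) :=
      fun c => Set.univ.pi (fun i => simpleSector (x i (c i)) (e i (c i))) with hScdef
    have hkey_c : ∀ c, T (∏ i, p i (c i)) (ind (Sc c)) = δ (fun i => x i (c i)) := by
      intro c
      have hprodsig : (∏ i, p i (c i)) = ∏ σ : Σ i, Fin (n i (c i)),
          (1 - single (Pi.single σ.1 (e σ.1 (c σ.1) σ.2) : ∀ i, V i) 1) := by
        rw [← Finset.univ_sigma_univ, Finset.prod_sigma]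
      have hSc_g : Sc c = gSector (fun i => x i (c i))
          (fun σ : Σ i, Fin (n i (c i)) => (Pi.single σ.1 (e σ.1 (c σ.1) σ.2) : ∀ i, V i)) :=
        pi_sector (fun i => x i (c i)) (fun i => e i (c i))
      rw [hprodsig, hSc_g]
      exact key_gen _ _ (linearIndependent_sigma _ (fun i => he i (c i)))
    have hchi : ind (Set.univ.pi (fun i => ⋃ j, simpleSector (x i j) (e i j)))
        = ∑ c : ∀ i, Fin (k i), ind (Sc c) := by
      funext v
      rw [hpiind]
      have h2 : ∀ i, ind (⋃ j, simpleSector (x i j) (e i j)) (v i)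
          = ∑ j, ind (simpleSector (x i j) (e i j)) (v i) := by
        intro i
        rw [ind_iUnion (fun j => simpleSector (x i j) (e i j)) (hd i), Finset.sum_apply]
      rw [Finset.prod_congr rfl (fun i _ => h2 i), Finset.prod_univ_sum,
        Fintype.piFinset_univ, Finset.sum_apply]
      exact Finset.sum_congr rfl (fun c _ => (hpiind _ v).symm)
    have hBexp : (∏ i, (∑ j, single (Pi.single i (x i j) : ∀ i, V i) 1 *
        ∏ j' ∈ Finset.univ.erase j, p i j'))
        = ∑ c : ∀ i, Fin (k i), single ((fun i => x i (c i)) : ∀ i, V i) 1 *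
            ∏ i, ∏ j' ∈ Finset.univ.erase (c i), p i j' := by
      rw [Finset.prod_univ_sum, Fintype.piFinset_univ]
      apply Finset.sum_congr rfl
      intro c _
      rw [Finset.prod_mul_distrib, prod_single_one, Finset.univ_sum_single]
    have h3 : ∀ c : ∀ i, Fin (k i),
        T (single ((fun i => x i (c i)) : ∀ i, V i) 1 *
          ∏ i, ∏ j' ∈ Finset.univ.erase (c i), p i j') (δ (0 : ∀ i, V i))
          = T P (ind (Sc c)) := by
      intro c
      rw [mul_comm, T_mul, T_single_delta, ← hkey_c c, ← T_mul]
      have hPsplit : ((∏ i, ∏ j' ∈ Finset.univ.erase (c i), p i j') * ∏ i, p i (c i)) = P := by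
        rw [hPdef, ← Finset.prod_mul_distrib]
        exact Finset.prod_congr rfl (fun i _ =>
          Finset.prod_erase_mul Finset.univ (p i) (Finset.mem_univ (c i)))
      rw [hPsplit]
    calc T B (δ (0 : ∀ i, V i))
        = T Q (T (∏ i, (∑ j, single (Pi.single i (x i j) : ∀ i, V i) 1 *
            ∏ j' ∈ Finset.univ.erase j, p i j')) (δ (0 : ∀ i, V i))) := by
          rw [hBdef, T_mul]
      _ = T Q (∑ c : ∀ i, Fin (k i), T P (ind (Sc c))) := by
          rw [hBexp, map_sum, LinearMap.sum_apply,
            Finset.sum_congr rfl (fun c (_ : c ∈ Finset.univ) => h3 c)]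
      _ = T Q (T P (∑ c : ∀ i, Fin (k i), ind (Sc c))) := by
          rw [map_sum (T P)]
      _ = T (Q * P) (ind (Set.univ.pi (fun i => ⋃ j, simpleSector (x i j) (e i j)))) := by
          rw [← hchi, T_mul]
  have hAB : A = B := T_inj (by rw [hTA, hTB, hunion])
  -- transfer to the fraction field
  have hfield : ∀ (nu d r : L), d ≠ 0 → nu / d * (d * r) = nu * r := by
    intro nu d r hdne; rw [← mul_assoc, div_mul_cancel₀ _ hdne]
  have hSf : ∀ t, Sfrac (y t) (f t) = alg (single (y t) 1) / alg (q t) := by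
    intro t
    have h0 : Sfrac (y t) (f t)
        = alg (single (y t) 1) / ∏ s, (1 - alg (single (f t s) 1)) := rfl
    rw [h0, hqdef, map_prod]
    congr 1
    exact Finset.prod_congr rfl (fun s _ => by rw [map_sub, map_one])
  have hφS : ∀ i j, φ i (Sfrac (x i j) (e i j))
      = alg (single (Pi.single i (x i j) : ∀ i, V i) 1) / alg (p i j) := by
    intro i j
    have h0 : Sfrac (x i j) (e i j)
        = algebraMap (AddMonoidAlgebra ℚ (V i)) (FractionRing (AddMonoidAlgebra ℚ (V i)))
            (single (x i j) 1) /
          ∏ ℓ, (1 - algebraMap (AddMonoidAlgebra ℚ (V i)) (FractionRing (AddMonoidAlgebra ℚ (V i)))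
            (single (e i j ℓ) 1)) := rfl
    rw [h0, map_div₀, map_prod, hφ i (x i j)]
    congr 1
    rw [hpdef, map_prod]
    exact Finset.prod_congr rfl (fun ℓ _ => by rw [map_sub, map_one, map_sub, map_one, hφ i (e i j ℓ)])
  have hDne : alg (Q * P) ≠ 0 := halg0 (mul_ne_zero hQ0 hP0)
  apply mul_right_cancel₀ hDne
  have hLHS : (∑ t, Sfrac (y t) (f t)) * alg (Q * P) = alg A := by
    rw [Finset.sum_mul, hAdef, map_sum]
    apply Finset.sum_congr rfl
    intro t _
    rw [hSf t]
    have hQsplit : Q * P = q t * ((∏ t' ∈ Finset.univ.erase t, q t') * P) := by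
      rw [hQdef, ← Finset.prod_erase_mul Finset.univ q (Finset.mem_univ t)]; ring
    rw [hQsplit, map_mul, hfield _ _ _ (halg0 (hq0 t)), ← map_mul]
  have hi : ∀ i, φ i (∑ j, Sfrac (x i j) (e i j)) * alg (∏ j, p i j)
      = alg (∑ j, single (Pi.single i (x i j) : ∀ i, V i) 1 *
          ∏ j' ∈ Finset.univ.erase j, p i j') := by
    intro i
    rw [map_sum (φ i), Finset.sum_mul, map_sum alg]
    apply Finset.sum_congr rfl
    intro j _
    rw [hφS i j]
    have hsplit : (∏ j'', p i j'') = p i j * ∏ j' ∈ Finset.univ.erase j, p i j' :=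
      (Finset.mul_prod_erase Finset.univ (p i) (Finset.mem_univ j)).symm
    rw [hsplit, map_mul, hfield _ _ _ (halg0 (hp0 i j)), ← map_mul]
  have hRHS : (∏ i, φ i (∑ j, Sfrac (x i j) (e i j))) * alg (Q * P) = alg B := by
    calc (∏ i, φ i (∑ j, Sfrac (x i j) (e i j))) * alg (Q * P)
        = alg Q * ((∏ i, φ i (∑ j, Sfrac (x i j) (e i j))) * ∏ i, alg (∏ j, p i j)) := by
          rw [map_mul, hPdef]; simp only [map_prod]; ring
      _ = alg Q * ∏ i, (φ i (∑ j, Sfrac (x i j) (e i j)) * alg (∏ j, p i j)) := by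
          rw [← Finset.prod_mul_distrib]
      _ = alg Q * ∏ i, alg (∑ j, single (Pi.single i (x i j) : ∀ i, V i) 1 *
            ∏ j' ∈ Finset.univ.erase j, p i j') := by
          rw [Finset.prod_congr rfl (fun i _ => hi i)]
      _ = alg B := by rw [hBdef, map_mul]; simp only [map_prod]
  rw [hLHS, hRHS, hAB]
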